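/- Fix a prime power q, integers 1 ≤ t ≤ k, and j ∈ {0,…,t}, and let D_j be as in the context. Then the number of permutations π of {0, 1, …, t} such that the entry of D_j in row i and column π(i) is nonzero for every i ∈ {0,…,t} is at most 2^t. -/

import Mathlib

/-- The Gaussian (q-)binomial coefficient `[a choose b]_q`, defined (in `ℚ`) by the
product formula `∏_{i=0}^{b-1} (q^{a-i} − 1)/(q^{b-i} − 1)`.  (With truncated natural
subtraction in the exponents, this automatically evaluates to `0` when `b > a`.) -/
def gaussBinom (q a b : ℕ) : ℚ :=
  ∏ i ∈ Finset.range b, (((q : ℚ) ^ (a - i) - 1) / ((q : ℚ) ^ (b - i) - 1))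

/-- The entry `d_{l,j} = [t−l choose t−j]_q · [k−t+l choose j]_q · q^{(k−t−j+l)(t−j)}`
(for `l ≤ j`; all subtractions are truncated, which is harmless since whenever the
truncation matters one of the Gaussian binomial factors vanishes). -/
def dEnt (q k t l j : ℕ) : ℚ :=
  gaussBinom q (t - l) (t - j) * gaussBinom q (k - t + l) j *
    (q : ℚ) ^ ((k + l - t - j) * (t - j))

/-- The upper-triangular `(t+1) × (t+1)` matrix `D` with entries `d_{l,j}` for `l ≤ j`
and `0` for `l > j`. -/
def Dmat (q k t : ℕ) : Matrix (Fin (t + 1)) (Fin (t + 1)) ℚ :=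
  fun l j => if (l : ℕ) ≤ (j : ℕ) then dEnt q k t l j else 0

/-- The matrix `D_j`, obtained from `D` by replacing its `j`-th column with the column
vector `(0, 0, …, 0, 1)ᵀ`. -/
def DmatJ (q k t : ℕ) (j : Fin (t + 1)) : Matrix (Fin (t + 1)) (Fin (t + 1)) ℚ :=
  (Dmat q k t).updateCol j (fun l => if l = Fin.last t then 1 else 0)


lemma perm_eq_one_of_le {n : ℕ} (π : Equiv.Perm (Fin n)) (h : ∀ i, i ≤ π i) : π = 1 := by
  have hsum : ∑ i : Fin n, ((π i : ℕ)) = ∑ i : Fin n, (i : ℕ) := Equiv.sum_comp π _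
  have h2 := (Finset.sum_eq_sum_iff_of_le (s := Finset.univ)
      (f := fun i : Fin n => (i : ℕ)) (g := fun i : Fin n => (π i : ℕ))
      (fun i _ => h i)).mp hsum.symm
  exact Equiv.ext fun i => (Fin.ext (h2 i (Finset.mem_univ i)).symm)

lemma next_step {t : ℕ} (π : Equiv.Perm (Fin (t + 1)))
    (h2 : ∀ x : Fin (t + 1), x ≠ Fin.last t → x ≤ π x)
    (i : Fin (t + 1)) (hi : i ≠ Fin.last t) (hfix : π i ≠ i)
    (hne : (Finset.univ.filter fun x => i < x ∧ π x ≠ x).Nonempty) :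
    π i = (Finset.univ.filter fun x => i < x ∧ π x ≠ x).min' hne := by
  set S := Finset.univ.filter fun x => i < x ∧ π x ≠ x with hS
  set m := S.min' hne with hm
  have hmS : m ∈ S := S.min'_mem hne
  rw [hS, Finset.mem_filter] at hmS
  obtain ⟨-, him, hπm⟩ := hmS
  set B := Finset.univ.filter (fun x : Fin (t + 1) => π x ≠ x ∧ x ≤ m) with hB
  set j := π (Fin.last t) with hj
  clear_value j
  have hmapsto : ∀ x ∈ B.erase j, π.symm x ∈ B.erase m := by
    intro x hx
    rw [Finset.mem_erase, hB, Finset.mem_filter] at hx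
    obtain ⟨hxj, -, hπx, hxm⟩ := hx
    have hyl : π.symm x ≠ Fin.last t := by
      intro h; apply hxj
      rw [hj, ← h, Equiv.apply_symm_apply]
    have hyx : π.symm x ≤ x := by
      have := h2 (π.symm x) hyl
      rwa [Equiv.apply_symm_apply] at this
    have hyne : π.symm x ≠ x := by
      intro h
      apply hπx
      conv_lhs => rw [← h]
      rw [Equiv.apply_symm_apply]
    have hylt : π.symm x < x := lt_of_le_of_ne hyx hyne
    rw [Finset.mem_erase, hB, Finset.mem_filter]
    refine ⟨(lt_of_lt_of_le hylt hxm).ne, Finset.mem_univ _, ?_, le_of_lt (lt_of_lt_of_le hylt hxm)⟩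
    rw [Equiv.apply_symm_apply]
    exact hyne.symm
  have hmB : m ∈ B := by
    rw [hB, Finset.mem_filter]; exact ⟨Finset.mem_univ _, hπm, le_refl _⟩
  have hcard : (B.erase m).card ≤ (B.erase j).card := by
    rw [Finset.card_erase_of_mem hmB]
    exact Finset.pred_card_le_card_erase
  have hiBm : i ∈ B.erase m := by
    rw [Finset.mem_erase, hB, Finset.mem_filter]
    exact ⟨ne_of_lt him, Finset.mem_univ _, hfix, le_of_lt him⟩
  obtain ⟨a, ha, hai⟩ := Finset.surj_on_of_inj_on_of_card_le (fun x _ => π.symm x)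
    (fun x hx => hmapsto x hx)
    (fun x₁ x₂ _ _ h => π.symm.injective h) hcard i hiBm
  have hπi : π i = a := by rw [hai, Equiv.apply_symm_apply]
  rw [Finset.mem_erase, hB, Finset.mem_filter] at ha
  obtain ⟨-, -, hπa, ham⟩ := ha
  have hia : i < a := by
    rw [← hπi]
    exact lt_of_le_of_ne (h2 i hi) (Ne.symm hfix)
  have haS : a ∈ S := by rw [hS, Finset.mem_filter]; exact ⟨Finset.mem_univ _, hia, hπa⟩
  have := S.min'_le a haS
  rw [hπi]
  exact le_antisymm ham this

lemma perm_unique {t : ℕ} (j : Fin (t + 1)) (π π' : Equiv.Perm (Fin (t + 1)))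
    (h1 : π (Fin.last t) = j) (h2 : ∀ x : Fin (t + 1), x ≠ Fin.last t → x ≤ π x)
    (h1' : π' (Fin.last t) = j) (h2' : ∀ x : Fin (t + 1), x ≠ Fin.last t → x ≤ π' x)
    (hpat : ∀ i : Fin (t + 1), i ≠ Fin.last t → (π i = i ↔ π' i = i)) : π = π' := by
  have eqone : ∀ (σ : Equiv.Perm (Fin (t + 1))),
      (∀ x : Fin (t + 1), x ≠ Fin.last t → x ≤ σ x) → σ (Fin.last t) = Fin.last t → σ = 1 := by
    intro σ hσ hσl
    apply perm_eq_one_of_le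
    intro x
    by_cases hx : x = Fin.last t
    · rw [hx, hσl]
    · exact hσ x hx
  have fixlast : ∀ (σ : Equiv.Perm (Fin (t + 1))),
      (∀ x : Fin (t + 1), x ≠ Fin.last t → σ x = x) → σ = 1 := by
    intro σ hσ
    have : σ (Fin.last t) = Fin.last t := by
      by_contra h
      have h2 : σ.symm (Fin.last t) ≠ Fin.last t := by
        intro hh
        apply h
        conv_lhs => rw [← hh]
        rw [Equiv.apply_symm_apply]
      have := hσ _ h2
      rw [Equiv.apply_symm_apply] at this
      exact h2 this.symm
    apply Equiv.ext
    intro x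
    by_cases hx : x = Fin.last t
    · rw [hx, this]; rfl
    · rw [hσ x hx]; rfl
  by_cases hid : π = 1
  · have : π' = 1 := by
      apply fixlast
      intro x hx
      exact (hpat x hx).mp (by rw [hid]; rfl)
    rw [hid, this]
  by_cases hid' : π' = 1
  · exact absurd (fixlast π fun x hx => (hpat x hx).mpr (by rw [hid']; rfl)) hid
  have hlast : π (Fin.last t) ≠ Fin.last t := fun h => hid (eqone π h2 h)
  have hlast' : π' (Fin.last t) ≠ Fin.last t := fun h => hid' (eqone π' h2' h)
  apply Equiv.ext
  intro i
  by_cases hi : i = Fin.last t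
  · rw [hi, h1, h1']
  by_cases hfix : π i = i
  · rw [hfix, (hpat i hi).mp hfix]
  have hfix' : π' i ≠ i := fun h => hfix ((hpat i hi).mpr h)
  have hSeq : (Finset.univ.filter fun x => i < x ∧ π x ≠ x)
      = (Finset.univ.filter fun x => i < x ∧ π' x ≠ x) := by
    apply Finset.filter_congr
    intro x _
    by_cases hx : x = Fin.last t
    · subst hx
      exact ⟨fun h => ⟨h.1, hlast'⟩, fun h => ⟨h.1, hlast⟩⟩
    · constructor
      · rintro ⟨ha, hb⟩; exact ⟨ha, fun h => hb ((hpat x hx).mpr h)⟩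
      · rintro ⟨ha, hb⟩; exact ⟨ha, fun h => hb ((hpat x hx).mp h)⟩
  have hne : (Finset.univ.filter fun x => i < x ∧ π x ≠ x).Nonempty := by
    refine ⟨Fin.last t, ?_⟩
    rw [Finset.mem_filter]
    exact ⟨Finset.mem_univ _, lt_of_le_of_ne (Fin.le_last i) hi, hlast⟩
  have hne' : (Finset.univ.filter fun x => i < x ∧ π' x ≠ x).Nonempty := hSeq ▸ hne
  rw [next_step π h2 i hi hfix hne, next_step π' h2' i hi hfix' hne']
  congr 1

lemma extract {q t k : ℕ} (j : Fin (t + 1)) (π : Equiv.Perm (Fin (t + 1)))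
    (hπ : ∀ i, DmatJ q k t j i (π i) ≠ 0) :
    π (Fin.last t) = j ∧ ∀ x : Fin (t + 1), x ≠ Fin.last t → x ≤ π x := by
  have hlj : π (Fin.last t) = j := by
    have h := hπ (π.symm j)
    rw [DmatJ, Matrix.updateCol_apply, Equiv.apply_symm_apply, if_pos rfl] at h
    by_cases hl : π.symm j = Fin.last t
    · rw [← hl, Equiv.apply_symm_apply]
    · rw [if_neg hl] at h; exact absurd rfl h
  refine ⟨hlj, fun x hx => ?_⟩
  have h := hπ x
  have hxj : π x ≠ j := by
    intro hh
    apply hx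
    have := π.injective (hlj.trans hh.symm)
    exact this.symm
  rw [DmatJ, Matrix.updateCol_apply, if_neg hxj, Dmat] at h
  by_cases hle : (x : ℕ) ≤ ((π x : Fin (t + 1)) : ℕ)
  · exact hle
  · rw [if_neg hle] at h; exact absurd rfl h

/-- For a prime power `q`, `1 ≤ t ≤ k` and `j ∈ {0,…,t}`, the matrix
`D_j` has at most `2^t` nonzero generalized diagonals: the number of permutations `π`
of `{0,…,t}` with `(D_j)_{i,π(i)} ≠ 0` for all `i` is at most `2^t`. -/
theorem card_nonzero_generalized_diagonals (q t k : ℕ) (hq : IsPrimePow q)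
    (ht : 1 ≤ t) (htk : t ≤ k) (j : Fin (t + 1)) :
    Nat.card {π : Equiv.Perm (Fin (t + 1)) // ∀ i, DmatJ q k t j i (π i) ≠ 0} ≤ 2 ^ t := by
  have hinj : Function.Injective
      (fun (π : {π : Equiv.Perm (Fin (t + 1)) // ∀ i, DmatJ q k t j i (π i) ≠ 0}) =>
        (fun i : Fin t => decide (π.1 i.castSucc = i.castSucc))) := by
    intro π π' h
    obtain ⟨h1, h2⟩ := extract j π.1 π.2
    obtain ⟨h1', h2'⟩ := extract j π'.1 π'.2
    apply Subtype.ext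
    apply perm_unique j π.1 π'.1 h1 h2 h1' h2'
    intro i hi
    obtain ⟨i', rfl⟩ := Fin.exists_castSucc_eq.mpr hi
    have := congrFun h i'
    simpa using this
  calc Nat.card {π : Equiv.Perm (Fin (t + 1)) // ∀ i, DmatJ q k t j i (π i) ≠ 0}
      ≤ Nat.card (Fin t → Bool) := Nat.card_le_card_of_injective _ hinj
    _ = 2 ^ t := by simp [Nat.card_eq_fintype_card]
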